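/- For all positive integers s and t, f(st) ≤ s + t. -/

import Mathlib

/-- The matching property: every set `A` of `m` positive integers and every real `x`
admit `r` disjoint pairs `(cᵢ, bᵢ)` with `cᵢ ∈ A` distinct, `bᵢ` distinct integers in
`(x, x + 2 * max A)`, and `cᵢ ∣ bᵢ`. -/
def MatchProp (m r : ℕ) : Prop :=
  ∀ A : Finset ℕ, A.card = m → (∀ a ∈ A, 0 < a) → ∀ x : ℝ,
    ∃ c : Fin r → ℕ, ∃ b : Fin r → ℤ,
      Function.Injective c ∧ Function.Injective b ∧
      ∀ i : Fin r, c i ∈ A ∧ (c i : ℤ) ∣ b i ∧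
        x < (b i : ℝ) ∧ (b i : ℝ) < x + 2 * (A.sup id : ℕ)

/-- `f m` is the largest `r` such that `MatchProp m r` holds. -/
noncomputable def f (m : ℕ) : ℕ := sSup {r : ℕ | MatchProp m r}

namespace ErdosAux

variable (s t : ℕ)

/-- bound for the construction -/
def Zc : ℕ := (s + 1) * (t + 1)

/-- the common "unit" δ -/
def dl : ℕ := Nat.factorial (Zc s t)

/-- the big shift N -/
def Nc : ℕ := 2 * Zc s t * dl s t + 1

/-- index exponents -/
def nn (i j : ℕ) : ℕ := (s + 1) * (j + 1) + i

/-- elements of the set A -/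
def ee (i j : ℕ) : ℕ := Nc s t + nn s i j * dl s t

lemma dl_pos : 0 < dl s t := by simp only [dl]; exact Nat.factorial_pos _

lemma nn_ge (i j : ℕ) : s + 1 ≤ nn s i j := by
  have h : (s+1) * 1 ≤ (s+1) * (j+1) := Nat.mul_le_mul_left _ (by omega)
  simp only [nn]; omega

lemma nn_le {i j : ℕ} (hi : i < s) (hj : j < t) : nn s i j + 2 ≤ Zc s t := by
  have h : (s+1) * (j+1) ≤ (s+1) * t := Nat.mul_le_mul_left _ (by omega)
  have h2 : Zc s t = (s+1) * t + (s+1) := by simp [Zc]; ring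
  simp only [nn]; omega

lemma nn_inj {i j i' j' : ℕ} (hi : i < s) (hi' : i' < s)
    (h : nn s i j = nn s i' j') : i = i' ∧ j = j' := by
  simp only [nn] at h
  rcases lt_trichotomy j j' with hj | hj | hj
  · have : (s+1) * (j+1) + (s+1) ≤ (s+1) * (j'+1) := by
      have := Nat.mul_le_mul_left (s+1) (show j + 2 ≤ j' + 1 by omega)
      calc (s+1) * (j+1) + (s+1) = (s+1) * (j+2) := by ring
        _ ≤ (s+1) * (j'+1) := this
    omega
  · subst hj; omega
  · have : (s+1) * (j'+1) + (s+1) ≤ (s+1) * (j+1) := by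
      have := Nat.mul_le_mul_left (s+1) (show j' + 2 ≤ j + 1 by omega)
      calc (s+1) * (j'+1) + (s+1) = (s+1) * (j'+2) := by ring
        _ ≤ (s+1) * (j+1) := this
    omega

lemma coprime_ee {i j i' j' : ℕ} (hi : i < s) (hj : j < t) (hi' : i' < s) (hj' : j' < t)
    (hne : nn s i j ≠ nn s i' j') : Nat.Coprime (ee s t i j) (ee s t i' j') := by
  by_contra h
  obtain ⟨q, hq, hq1, hq2⟩ := Nat.Prime.not_coprime_iff_dvd.mp h
  -- first show q ≤ Zc s t
  have hqZ : q ≤ Zc s t := by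
    -- q divides the difference (nn' - nn) * dl  (wlog)
    rcases Nat.lt_or_ge (nn s i j) (nn s i' j') with hlt | hge
    · have hdiff : ee s t i' j' - ee s t i j = (nn s i' j' - nn s i j) * dl s t := by
        simp only [ee]
        rw [Nat.add_sub_add_left, ← Nat.sub_mul]
      have hd : q ∣ (nn s i' j' - nn s i j) * dl s t := by
        rw [← hdiff]; exact Nat.dvd_sub hq2 hq1
      rcases (Nat.Prime.dvd_mul hq).mp hd with h1 | h2
      · have hle := Nat.le_of_dvd (by omega) h1
        have := nn_le s t hi' hj'
        omega
      · exact (Nat.Prime.dvd_factorial hq).mp (by simpa [dl] using h2)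
    · have hlt : nn s i' j' < nn s i j := by omega
      have hdiff : ee s t i j - ee s t i' j' = (nn s i j - nn s i' j') * dl s t := by
        simp only [ee]
        rw [Nat.add_sub_add_left, ← Nat.sub_mul]
      have hd : q ∣ (nn s i j - nn s i' j') * dl s t := by
        rw [← hdiff]; exact Nat.dvd_sub hq1 hq2
      rcases (Nat.Prime.dvd_mul hq).mp hd with h1 | h2
      · have hle := Nat.le_of_dvd (by omega) h1
        have := nn_le s t hi hj
        omega
      · exact (Nat.Prime.dvd_factorial hq).mp (by simpa [dl] using h2)
  have hqdl : q ∣ dl s t := by simp only [dl]; exact Nat.dvd_factorial hq.pos hqZ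
  have hqN : q ∣ Nc s t := by
    have : q ∣ nn s i j * dl s t := Dvd.dvd.mul_left hqdl _
    have := Nat.dvd_sub hq1 this
    simpa [ee] using this
  have : q ∣ 1 := by
    have h2 : q ∣ 2 * Zc s t * dl s t := Dvd.dvd.mul_left hqdl _
    have := Nat.dvd_sub hqN h2
    simpa [Nc] using this
  have := Nat.le_of_dvd one_pos this
  have := hq.two_le
  omega

/-- row products -/
def Pr (i : ℕ) : ℕ := ∏ j ∈ Finset.range t, ee s t i j

lemma coprime_Pr {i i' : ℕ} (hi : i < s) (hi' : i' < s) (hne : i ≠ i') :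
    Nat.Coprime (Pr s t i) (Pr s t i') := by
  apply Nat.Coprime.prod_left
  intro j hj
  apply Nat.Coprime.prod_right
  intro j' hj'
  refine coprime_ee s t hi (Finset.mem_range.mp hj) hi' (Finset.mem_range.mp hj') ?_
  intro h
  exact hne (nn_inj s hi hi' h).1

lemma crt_partial : ∀ k, k ≤ s → ∃ M : ℕ, ∀ i < k, M ≡ i * dl s t [MOD Pr s t i] := by
  intro k
  induction k with
  | zero => exact fun _ => ⟨0, fun i hi => absurd hi (by omega)⟩
  | succ k ih =>
    intro hk
    obtain ⟨M', hM'⟩ := ih (by omega)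
    have hco : Nat.Coprime (∏ i ∈ Finset.range k, Pr s t i) (Pr s t k) := by
      apply Nat.Coprime.prod_left
      intro i hi
      have hik := Finset.mem_range.mp hi
      exact coprime_Pr s t (by omega) (by omega) (by omega)
    obtain ⟨M, hM1, hM2⟩ := Nat.chineseRemainder hco M' (k * dl s t)
    refine ⟨M, fun i hi => ?_⟩
    rcases Nat.lt_or_ge i k with h | h
    · have hdvd : Pr s t i ∣ ∏ i ∈ Finset.range k, Pr s t i :=
        Finset.dvd_prod_of_mem _ (Finset.mem_range.mpr h)
      exact ((hM1.of_dvd hdvd).trans (hM' i h))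
    · have : i = k := by omega
      subst this; exact hM2

lemma crt : ∃ M : ℕ, ∀ i < s, ∀ j < t, M ≡ i * dl s t [MOD ee s t i j] := by
  obtain ⟨M, hM⟩ := crt_partial s t s le_rfl
  refine ⟨M, fun i hi j hj => ?_⟩
  exact (hM i hi).of_dvd (Finset.dvd_prod_of_mem _ (Finset.mem_range.mpr hj))


lemma key (hs : 0 < s) (ht : 0 < t) (r : ℕ) (hr : MatchProp (s * t) r) : r ≤ s + t := by
  classical
  obtain ⟨M, hM⟩ := crt s t
  set D : ℕ := dl s t with hD
  set N : ℕ := Nc s t with hN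
  set Z : ℕ := Zc s t with hZdef
  -- the set A
  set A : Finset ℕ :=
    ((Finset.range s) ×ˢ (Finset.range t)).image (fun p => ee s t p.1 p.2) with hA
  have hDpos : 0 < D := dl_pos s t
  have hcard : A.card = s * t := by
    rw [hA, Finset.card_image_of_injOn, Finset.card_product, Finset.card_range,
      Finset.card_range]
    intro p hp p' hp' hpe
    simp only [Finset.coe_product, Set.mem_prod, Finset.mem_coe, Finset.mem_range] at hp hp'
    simp only [ee] at hpe
    have hnn : nn s p.1 p.2 = nn s p'.1 p'.2 := by
      have := Nat.add_left_cancel hpe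
      exact Nat.eq_of_mul_eq_mul_right hDpos this
    have := nn_inj s hp.1 hp'.1 hnn
    exact Prod.ext this.1 this.2
  have hpos : ∀ a ∈ A, 0 < a := by
    intro a ha
    rw [hA] at ha
    obtain ⟨p, _, rfl⟩ := Finset.mem_image.mp ha
    simp only [ee, Nc]
    omega
  -- the maximum
  set amax : ℕ := ee s t (s - 1) (t - 1) with hamax
  have hnmax_mem : amax ∈ A := by
    rw [hA]
    exact Finset.mem_image.mpr ⟨(s - 1, t - 1),
      Finset.mem_product.mpr ⟨Finset.mem_range.mpr (by omega), Finset.mem_range.mpr (by omega)⟩,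
      rfl⟩
  have hnn_le_max : ∀ i < s, ∀ j < t, nn s i j ≤ nn s (s - 1) (t - 1) := by
    intro i hi j hj
    have h1 : (s + 1) * (j + 1) ≤ (s + 1) * ((t - 1) + 1) :=
      Nat.mul_le_mul_left _ (by omega)
    simp only [nn]
    omega
  have hsup : A.sup id = amax := by
    apply le_antisymm
    · apply Finset.sup_le
      intro a ha
      rw [hA] at ha
      obtain ⟨p, hp, rfl⟩ := Finset.mem_image.mp ha
      rw [Finset.mem_product] at hp
      have hi := Finset.mem_range.mp hp.1
      have hj := Finset.mem_range.mp hp.2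
      simp only [id, ee, hamax]
      exact Nat.add_le_add_left (Nat.mul_le_mul_right _ (hnn_le_max _ hi _ hj)) _
    · exact Finset.le_sup (f := id) hnmax_mem
  -- instantiate the matching property
  set X : ℤ := (M : ℤ) - N - ((s : ℤ) + 1) * D with hX
  obtain ⟨c, b, hcinj, hbinj, hp⟩ := hr A hcard hpos (X : ℝ)
  -- the target set B
  set B : Finset ℤ :=
    ((Finset.range s).image fun i : ℕ => (M : ℤ) - (i : ℤ) * D) ∪
      ((Finset.range t).image fun j : ℕ => (M : ℤ) + N + ((s : ℤ) + 1) * ((j : ℤ) + 1) * D)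
    with hB
  clear_value D N Z A amax X B
  -- numeric facts
  have hNval : (N : ℤ) = 2 * (Z : ℤ) * D + 1 := by
    rw [hN, Nc, ← hZdef, ← hD]; push_cast; ring
  have hZval : (Z : ℤ) = ((s : ℤ) + 1) * ((t : ℤ) + 1) := by
    rw [hZdef, Zc]; push_cast; ring
  -- every b k lies in B
  have hbB : ∀ k : Fin r, b k ∈ B := by
    intro k
    obtain ⟨hcA, hdvd, hx1, hx2⟩ := hp k
    rw [hsup] at hx2
    rw [hA] at hcA
    obtain ⟨⟨i, j⟩, hpm, hpe⟩ := Finset.mem_image.mp hcA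
    rw [Finset.mem_product] at hpm
    have hi := Finset.mem_range.mp hpm.1
    have hj := Finset.mem_range.mp hpm.2
    -- integer versions of the bounds
    have hx1' : X < b k := by exact_mod_cast hx1
    have hx2' : b k < X + 2 * (amax : ℤ) := by exact_mod_cast hx2
    -- divisibility
    have hMd : ((ee s t i j : ℕ) : ℤ) ∣ ((i : ℤ) * D - M) := by
      have := (hM i hi j hj).dvd
      push_cast at this ⊢
      convert this using 1
    have hdvd' : ((ee s t i j : ℕ) : ℤ) ∣ b k - ((M : ℤ) - (i : ℤ) * D) := by
      have h1 : ((ee s t i j : ℕ) : ℤ) ∣ b k := by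
        rw [show ee s t i j = c k from hpe]; exact hdvd
      have := dvd_add h1 hMd
      rw [show b k - ((M : ℤ) - (i : ℤ) * D) = b k + ((i : ℤ) * D - M) by ring]
      exact this
    obtain ⟨m, hm⟩ := hdvd'
    -- abbreviations
    set E : ℤ := ((ee s t i j : ℕ) : ℤ) with hE
    have hEval : E = (N : ℤ) + (nn s i j : ℤ) * D := by
      rw [hE, ee, ← hN, ← hD]; push_cast; ring
    have hamaxval : (amax : ℤ) = (N : ℤ) + (nn s (s - 1) (t - 1) : ℤ) * D := by
      rw [hamax, ee, ← hN, ← hD]; push_cast; ring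
    have hnge : (s : ℤ) + 1 ≤ (nn s i j : ℤ) := by exact_mod_cast nn_ge s i j
    have hnle : (nn s i j : ℤ) + 2 ≤ (Z : ℤ) := by
      rw [hZdef]
      have h := nn_le s t (i := i) (j := j) hi hj
      exact_mod_cast h
    have hnmle : (nn s (s - 1) (t - 1) : ℤ) + 2 ≤ (Z : ℤ) := by
      rw [hZdef]
      exact_mod_cast nn_le s t (i := s - 1) (j := t - 1) (by omega) (by omega)
    have hD1 : (1 : ℤ) ≤ (D : ℤ) := by exact_mod_cast hDpos
    have hi' : (i : ℤ) ≤ (s : ℤ) - 1 := by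
      have hii : (i, j).1 < s := hi
      simp only at hii
      omega
    have hipos : (0 : ℤ) ≤ (i : ℤ) := Int.natCast_nonneg _
    have hEpos : 0 < E := by
      have h0 : 0 < ee s t i j := by
        have : 0 < Nc s t := Nat.succ_pos _
        exact lt_of_lt_of_le this (Nat.le_add_right _ _)
      rw [hE]; exact_mod_cast h0
    clear_value E
    -- the case analysis on m
    have hbk : b k = (M : ℤ) - (i : ℤ) * D + E * m := by linarith [hm]
    have hm01 : m = 0 ∨ m = 1 := by
      by_contra hcon
      have hm2 : m ≤ -1 ∨ 2 ≤ m := by omega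
      have hD0 : (0 : ℤ) ≤ (D : ℤ) := by linarith
      rcases hm2 with hneg | hpos2
      · -- previous multiple: b k ≤ X, contradiction
        have h1 : E * m ≤ E * (-1) := mul_le_mul_of_nonneg_left hneg (le_of_lt hEpos)
        have h2 : ((s : ℤ) + 1) * D ≤ (nn s i j : ℤ) * D :=
          mul_le_mul_of_nonneg_right hnge hD0
        have h3 : 0 ≤ (i : ℤ) * D := mul_nonneg hipos hD0
        have : b k ≤ X := by rw [hbk, hX]; linarith [hEval]
        linarith
      · -- next-next multiple: b k ≥ X + 2 amax, contradiction
        have h1 : E * 2 ≤ E * m := mul_le_mul_of_nonneg_left hpos2 (le_of_lt hEpos)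
        have hco : ((i : ℤ) + 2 * (nn s (s - 1) (t - 1) : ℤ)) * D ≤
            (2 * (Z : ℤ) + 2 * (nn s i j : ℤ) + (s : ℤ) + 1) * D := by
          apply mul_le_mul_of_nonneg_right _ hD0
          linarith
        have h3 : 0 ≤ (i : ℤ) * D := mul_nonneg hipos hD0
        have : X + 2 * (amax : ℤ) ≤ b k := by
          rw [hbk, hX, hamaxval]
          linarith [h1, hEval, hNval, hco, h3]
        linarith
    rcases hm01 with rfl | rfl
    · rw [hB]
      apply Finset.mem_union_left
      apply Finset.mem_image.mpr
      exact ⟨i, Finset.mem_range.mpr hi, by rw [hbk]; ring⟩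
    · rw [hB]
      apply Finset.mem_union_right
      apply Finset.mem_image.mpr
      refine ⟨j, Finset.mem_range.mpr hj, ?_⟩
      rw [hbk, hEval]
      have hnnval : (nn s i j : ℤ) = ((s : ℤ) + 1) * ((j : ℤ) + 1) + i := by
        rw [nn]; push_cast; ring
      rw [hnnval]; ring
  -- count
  have hrB : r ≤ B.card := by
    have h1 : (Finset.univ : Finset (Fin r)).card ≤ B.card := by
      apply Finset.card_le_card_of_injOn b (fun k _ => hbB k)
      exact Function.Injective.injOn hbinj
    simpa using h1
  have hBcard : B.card ≤ s + t := by
    rw [hB]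
    refine le_trans (Finset.card_union_le _ _) ?_
    have h1 := Finset.card_image_le (s := Finset.range s)
      (f := fun i : ℕ => (M : ℤ) - (i : ℤ) * D)
    have h2 := Finset.card_image_le (s := Finset.range t)
      (f := fun j : ℕ => (M : ℤ) + N + ((s : ℤ) + 1) * ((j : ℤ) + 1) * D)
    simp only [Finset.card_range] at h1 h2
    omega
  omega

end ErdosAux

theorem erdos_f_upper_bound (s t : ℕ) (hs : 0 < s) (ht : 0 < t) :
    f (s * t) ≤ s + t := by
  apply csSup_le
  · exact ⟨0, fun A hA hpos x =>
      ⟨fun i => i.elim0, fun i => i.elim0, fun i => i.elim0, fun i => i.elim0,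
        fun i => i.elim0⟩⟩
  · intro r hr
    exact ErdosAux.key s t hs ht r hr
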